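/- Let L be a graph with k pairwise cospectral vertices a₁, …, a_k and a vertex r ∉ {a₁, …, a_k} such that a₁, …, a_k are also pairwise cospectral in L \ r. Let G be any graph, v ∈ V(G), and let G' be the 1-sum of G and L obtained by identifying v with r. Then a₁, …, a_k are pairwise cospectral vertices of G'. -/

import Mathlib

/-- The characteristic polynomial `φ(G, x) = det(xI - A(G))` of a finite simple graph. -/
noncomputable def charPolyG {V : Type*} [Fintype V] [DecidableEq V] (G : SimpleGraph V) :
    Polynomial ℤ :=
  letI := Classical.decRel G.Adj
  Matrix.charpoly (G.adjMatrix ℤ)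

/-- The graph obtained from `G` by deleting the vertex `v` and all incident edges. -/
def deleteVert {V : Type*} (G : SimpleGraph V) (v : V) : SimpleGraph {u : V // u ≠ v} :=
  G.induce {u : V | u ≠ v}

/-- The graph obtained from `G` by deleting the vertices `u` and `v` and all
incident edges. -/
def deleteVert2 {V : Type*} (G : SimpleGraph V) (u v : V) :
    SimpleGraph {x : V // x ≠ u ∧ x ≠ v} :=
  G.induce {x : V | x ≠ u ∧ x ≠ v}

/-- The 1-sum of `H` and `K`, identifying `u ∈ V(H)` with `w ∈ V(K)` into a single
vertex (the `Sum.inr` vertex). -/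
def oneSum {α β : Type*} (H : SimpleGraph α) (K : SimpleGraph β) (u : α) (w : β) :
    SimpleGraph (({x : α // x ≠ u} ⊕ {y : β // y ≠ w}) ⊕ Unit) :=
  SimpleGraph.fromRel (fun a b =>
    match a, b with
    | .inl (.inl x), .inl (.inl y) => H.Adj x.1 y.1
    | .inl (.inr x), .inl (.inr y) => K.Adj x.1 y.1
    | .inl (.inl x), .inr _ => H.Adj x.1 u
    | .inl (.inr y), .inr _ => K.Adj y.1 w
    | _, _ => False)

open Matrix Polynomial

section Equivs
variable {α β : Type*} (v : α) (r : β) (a : β)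

/-- split a type at a point -/
def splitAt [DecidableEq α] : α ≃ ({x : α // x ≠ v} ⊕ Unit) where
  toFun x := if h : x = v then .inr () else .inl ⟨x, h⟩
  invFun := Sum.elim (fun x => x.1) (fun _ => v)
  left_inv x := by by_cases h : x = v <;> simp [h]
  right_inv := by
    rintro (⟨x, hx⟩ | u)
    · simp [hx]
    · simp

/-- split `{y // y ≠ a}` at `r`. -/
def splitAt2 [DecidableEq β] (ha : a ≠ r) :
    {y : β // y ≠ a} ≃ ({y : β // y ≠ a ∧ y ≠ r} ⊕ Unit) where
  toFun y := if h : y.1 = r then .inr () else .inl ⟨y.1, y.2, h⟩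
  invFun := Sum.elim (fun z => ⟨z.1, z.2.1⟩) (fun _ => ⟨r, fun h => ha h.symm⟩)
  left_inv y := by
    rcases y with ⟨y, hy⟩
    by_cases h : y = r <;> simp [h]
  right_inv := by
    rintro (⟨x, hx1, hx2⟩ | u)
    · simp [hx2]
    · simp

/-- reorganize the vertices of the 1-sum minus `a`. -/
def splitBig (ha : a ≠ r) :
    {u : ({x : α // x ≠ v} ⊕ {y : β // y ≠ r}) ⊕ Unit // u ≠ .inl (.inr ⟨a, ha⟩)} ≃
      (({x : α // x ≠ v} ⊕ {y : β // y ≠ a ∧ y ≠ r}) ⊕ Unit) where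
  toFun u := match u with
    | ⟨.inl (.inl x), _⟩ => .inl (.inl x)
    | ⟨.inl (.inr y), h⟩ =>
        .inl (.inr ⟨y.1, fun hya => h (by rw [show y = (⟨a, ha⟩ : {y : β // y ≠ r}) from
          Subtype.ext hya]), y.2⟩)
    | ⟨.inr _, _⟩ => .inr ()
  invFun z := match z with
    | .inl (.inl x) => ⟨.inl (.inl x), by simp⟩
    | .inl (.inr y) => ⟨.inl (.inr ⟨y.1, y.2.2⟩), by
        simp only [ne_eq, Sum.inl.injEq, Sum.inr.injEq, Subtype.mk.injEq]
        exact y.2.1⟩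
    | .inr _ => ⟨.inr (), by simp⟩
  left_inv u := by rcases u with ⟨(x | y) | u, h⟩ <;> rfl
  right_inv z := by rcases z with (x | y) | z <;> rfl
end Equivs

section Key
variable {n m R : Type*} [Fintype n] [DecidableEq n] [Fintype m] [DecidableEq m] [CommRing R]

def smallM (P : Matrix n n R) (c c' : n → R) (t : R) : Matrix (n ⊕ Unit) (n ⊕ Unit) R :=
  Matrix.of fun i j => match i, j with
    | .inl i, .inl j => P i j
    | .inl i, .inr _ => c i
    | .inr _, .inl j => c' j
    | .inr _, .inr _ => t

def bigM (P : Matrix n n R) (Q : Matrix m m R) (c c' : n → R) (d d' : m → R) (t : R) :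
    Matrix ((n ⊕ m) ⊕ Unit) ((n ⊕ m) ⊕ Unit) R :=
  Matrix.of fun i j => match i, j with
    | .inl (.inl i), .inl (.inl j) => P i j
    | .inl (.inr i), .inl (.inr j) => Q i j
    | .inl (.inl i), .inr _ => c i
    | .inr _, .inl (.inl j) => c' j
    | .inl (.inr i), .inr _ => d i
    | .inr _, .inl (.inr j) => d' j
    | .inr _, .inr _ => t
    | _, _ => 0

lemma smallM_det (P : Matrix n n R) (c c' : n → R) (t : R) :
    (smallM P c c' t).det = (smallM P c c' 0).det + t * P.det := by
  have h : smallM P c c' t =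
      (smallM P c c' t).updateRow (.inr ())
        ((Sum.elim c' 0) + (Sum.elim (fun _ => (0:R)) fun _ => t)) := by
    ext i j
    rcases i with i | i <;> rcases j with j | j <;>
      simp [smallM, Matrix.updateRow_apply]
  have h1 : (smallM P c c' t).updateRow (.inr ()) (Sum.elim c' 0) = smallM P c c' 0 := by
    ext i j
    rcases i with i | i <;> rcases j with j | j <;>
      simp [smallM, Matrix.updateRow_apply]
  have h2 : (smallM P c c' t).updateRow (.inr ()) (Sum.elim (fun _ => (0:R)) fun _ => t) =
      Matrix.fromBlocks P (Matrix.of fun i (_ : Unit) => c i) 0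
        (Matrix.of fun (_ : Unit) (_ : Unit) => t) := by
    ext i j
    rcases i with i | i <;> rcases j with j | j <;>
      simp [smallM, Matrix.updateRow_apply, Matrix.fromBlocks]
  rw [h, Matrix.det_updateRow_add, h1, h2, Matrix.det_fromBlocks_zero₂₁,
    show (Matrix.of fun (_ : Unit) (_ : Unit) => t).det = t from Matrix.det_unique _]
  ring

/-- reindexing equiv `(n ⊕ m) ⊕ Unit ≃ (n ⊕ Unit) ⊕ m`. -/
def eB : ((n ⊕ m) ⊕ Unit) ≃ ((n ⊕ Unit) ⊕ m) where
  toFun x := match x with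
    | .inl (.inl i) => .inl (.inl i)
    | .inl (.inr j) => .inr j
    | .inr _ => .inl (.inr ())
  invFun x := match x with
    | .inl (.inl i) => .inl (.inl i)
    | .inr j => .inl (.inr j)
    | .inl (.inr _) => .inr ()
  left_inv := by rintro ((i | j) | ⟨⟩) <;> rfl
  right_inv := by rintro ((i | ⟨⟩) | j) <;> rfl

lemma bigM_det (P : Matrix n n R) (Q : Matrix m m R) (c c' : n → R) (d d' : m → R) (t : R) :
    (bigM P Q c c' d d' t).det =
      P.det * (smallM Q d d' t).det + (smallM P c c' t).det * Q.det - t * P.det * Q.det := by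
  set M := bigM P Q c c' d d' t with hM
  -- row splitting at the Unit row
  set r1 : ((n ⊕ m) ⊕ Unit) → R := fun j => match j with
    | .inl (.inl j) => c' j
    | _ => 0 with hr1
  set r2 : ((n ⊕ m) ⊕ Unit) → R := fun j => match j with
    | .inl (.inr j) => d' j
    | .inr _ => t
    | _ => 0 with hr2
  have hsplit : M = M.updateRow (.inr ()) (r1 + r2) := by
    ext i j
    rcases i with (i | i) | i <;> rcases j with (j | j) | j <;>
      simp [hM, bigM, hr1, hr2, Matrix.updateRow_apply]
  set M1 := M.updateRow (.inr ()) r1 with hM1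
  set M2 := M.updateRow (.inr ()) r2 with hM2
  have hdet : M.det = M1.det + M2.det := by
    rw [hsplit, Matrix.det_updateRow_add]
  -- M2 : via sumAssoc
  have hM2det : M2.det = P.det * (smallM Q d d' t).det := by
    rw [← Matrix.det_reindex_self (Equiv.sumAssoc n m Unit) M2]
    have : (Matrix.reindex (Equiv.sumAssoc n m Unit) (Equiv.sumAssoc n m Unit)) M2 =
        Matrix.fromBlocks P
          (Matrix.of fun i j => Sum.elim (fun _ => (0:R)) (fun _ => c i) j) 0
          (smallM Q d d' t) := by
      ext i j
      rcases i with i | (i | i) <;> rcases j with j | (j | j) <;>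
        simp [hM2, hM, bigM, hr2, smallM, Matrix.updateRow_apply, Matrix.fromBlocks,
          Equiv.sumAssoc]
    rw [this, Matrix.det_fromBlocks_zero₂₁]
  -- M1 : split the Unit column
  set c1 : ((n ⊕ m) ⊕ Unit) → R := fun i => match i with
    | .inl (.inl i) => c i
    | _ => 0 with hc1
  set c2 : ((n ⊕ m) ⊕ Unit) → R := fun i => match i with
    | .inl (.inr i) => d i
    | _ => 0 with hc2
  have hsplit1 : M1 = M1.updateCol (.inr ()) (c1 + c2) := by
    ext i j
    rcases i with (i | i) | i <;> rcases j with (j | j) | j <;>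
      simp [hM1, hM, bigM, hr1, hc1, hc2, Matrix.updateRow_apply, Matrix.updateCol_apply]
  have hM1a : (M1.updateCol (.inr ()) c1).det = (smallM P c c' 0).det * Q.det := by
    rw [← Matrix.det_reindex_self (eB (n := n) (m := m)) _]
    have : (Matrix.reindex (eB (n := n) (m := m)) eB) (M1.updateCol (.inr ()) c1) =
        Matrix.fromBlocks (smallM P c c' 0) 0 0 Q := by
      ext i j
      rcases i with (i | i) | i <;> rcases j with (j | j) | j <;>
        simp [hM1, hM, bigM, hr1, hc1, smallM, Matrix.updateRow_apply,
          Matrix.updateCol_apply, Matrix.fromBlocks, eB]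
    rw [this, Matrix.det_fromBlocks_zero₁₂]
  have hM1b : (M1.updateCol (.inr ()) c2).det = 0 := by
    rw [← Matrix.det_reindex_self (eB (n := n) (m := m)) _]
    have : (Matrix.reindex (eB (n := n) (m := m)) eB) (M1.updateCol (.inr ()) c2) =
        Matrix.fromBlocks
          (Matrix.of fun i j => match i, j with
            | .inl i, .inl j => P i j
            | .inr _, .inl j => c' j
            | _, .inr _ => 0) 0
          (Matrix.of fun i j => Sum.elim (fun _ => (0:R)) (fun (_ : Unit) => d i) j) Q := by
      ext i j
      rcases i with (i | i) | i <;> rcases j with (j | j) | j <;>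
        simp [hM1, hM, bigM, hr1, hc2, smallM, Matrix.updateRow_apply,
          Matrix.updateCol_apply, Matrix.fromBlocks, eB]
    rw [this, Matrix.det_fromBlocks_zero₁₂]
    have hz : (Matrix.of fun (i j : n ⊕ Unit) => match i, j with
            | .inl i, .inl j => P i j
            | .inr _, .inl j => c' j
            | _, .inr _ => (0:R)).det = 0 := by
      apply Matrix.det_eq_zero_of_column_eq_zero (Sum.inr ())
      rintro (i | i) <;> rfl
    rw [hz, zero_mul]
  have hM1det : M1.det = (smallM P c c' 0).det * Q.det := by
    rw [hsplit1, Matrix.det_updateCol_add, hM1a, hM1b, add_zero]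
  rw [hdet, hM1det, hM2det, smallM_det P c c' t]
  ring

lemma charmatrix_smallM (P : Matrix n n R) (c c' : n → R) (t : R) :
    (smallM P c c' t).charmatrix =
      smallM P.charmatrix (fun i => -C (c i)) (fun j => -C (c' j)) (X - C t) := by
  ext i j
  rcases i with i | i <;> rcases j with j | j
  · by_cases h : i = j
    · subst h
      rw [Matrix.charmatrix_apply_eq]
      simp [smallM, Matrix.charmatrix_apply_eq]
    · rw [Matrix.charmatrix_apply_ne _ _ _ (by simp [h])]
      simp [smallM, Matrix.charmatrix_apply_ne _ _ _ h]
  · rw [Matrix.charmatrix_apply_ne _ _ _ (by simp)]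
    simp [smallM]
  · rw [Matrix.charmatrix_apply_ne _ _ _ (by simp)]
    simp [smallM]
  · rw [show (Sum.inr i : n ⊕ Unit) = Sum.inr j from (by cases i; cases j; rfl),
      Matrix.charmatrix_apply_eq]
    simp [smallM]

lemma charmatrix_bigM (P : Matrix n n R) (Q : Matrix m m R) (c c' : n → R) (d d' : m → R)
    (t : R) :
    (bigM P Q c c' d d' t).charmatrix =
      bigM P.charmatrix Q.charmatrix (fun i => -C (c i)) (fun j => -C (c' j))
        (fun i => -C (d i)) (fun j => -C (d' j)) (X - C t) := by
  ext i j
  rcases i with (i | i) | i <;> rcases j with (j | j) | j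
  · by_cases h : i = j
    · subst h
      rw [Matrix.charmatrix_apply_eq]
      simp [bigM, Matrix.charmatrix_apply_eq]
    · rw [Matrix.charmatrix_apply_ne _ _ _ (by simp [h])]
      simp [bigM, Matrix.charmatrix_apply_ne _ _ _ h]
  · rw [Matrix.charmatrix_apply_ne _ _ _ (by simp)]; simp [bigM]
  · rw [Matrix.charmatrix_apply_ne _ _ _ (by simp)]; simp [bigM]
  · rw [Matrix.charmatrix_apply_ne _ _ _ (by simp)]; simp [bigM]
  · by_cases h : i = j
    · subst h
      rw [Matrix.charmatrix_apply_eq]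
      simp [bigM, Matrix.charmatrix_apply_eq]
    · rw [Matrix.charmatrix_apply_ne _ _ _ (by simp [h])]
      simp [bigM, Matrix.charmatrix_apply_ne _ _ _ h]
  · rw [Matrix.charmatrix_apply_ne _ _ _ (by simp)]; simp [bigM]
  · rw [Matrix.charmatrix_apply_ne _ _ _ (by simp)]; simp [bigM]
  · rw [Matrix.charmatrix_apply_ne _ _ _ (by simp)]; simp [bigM]
  · rw [show (Sum.inr i : (n ⊕ m) ⊕ Unit) = Sum.inr j from (by cases i; cases j; rfl),
      Matrix.charmatrix_apply_eq]
    simp [bigM]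

end Key

lemma charPolyG_eq_charpoly {γ δ : Type*} [Fintype γ] [DecidableEq γ] [Fintype δ]
    [DecidableEq δ] (H : SimpleGraph γ) (N : Matrix δ δ ℤ) (e : γ ≃ δ)
    (h1 : ∀ i j, H.Adj i j → N (e i) (e j) = 1)
    (h0 : ∀ i j, ¬ H.Adj i j → N (e i) (e j) = 0) :
    charPolyG H = N.charpoly := by
  unfold charPolyG
  letI := Classical.decRel H.Adj
  rw [← Matrix.charpoly_reindex e (H.adjMatrix ℤ)]
  congr 1
  ext i j
  rw [Matrix.reindex_apply, Matrix.submatrix_apply, SimpleGraph.adjMatrix_apply]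
  by_cases h : H.Adj (e.symm i) (e.symm j)
  · have := h1 _ _ h; simp only [Equiv.apply_symm_apply] at this
    rw [if_pos h, this]
  · have := h0 _ _ h; simp only [Equiv.apply_symm_apply] at this
    rw [if_neg h, this]

lemma bigM_charpoly {n m R : Type*} [Fintype n] [DecidableEq n] [Fintype m] [DecidableEq m]
    [CommRing R] (P : Matrix n n R) (Q : Matrix m m R) (c : n → R) (d : m → R) :
    (bigM P Q c c d d 0).charpoly =
      P.charpoly * (smallM Q d d 0).charpoly + (smallM P c c 0).charpoly * Q.charpoly
        - X * P.charpoly * Q.charpoly := by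
  unfold Matrix.charpoly
  rw [charmatrix_bigM, bigM_det, ← charmatrix_smallM, ← charmatrix_smallM]
  rw [map_zero, sub_zero]


/-- Adjacency matrix with classical decidability. -/
noncomputable def adjM {V : Type*} [Fintype V] [DecidableEq V] (G : SimpleGraph V) :
    Matrix V V ℤ :=
  letI := Classical.decRel G.Adj
  G.adjMatrix ℤ

lemma charPolyG_def {V : Type*} [Fintype V] [DecidableEq V] (G : SimpleGraph V) :
    charPolyG G = (adjM G).charpoly := rfl

lemma adjM_one {V : Type*} [Fintype V] [DecidableEq V] {G : SimpleGraph V} {x y : V}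
    (h : G.Adj x y) : adjM G x y = 1 := by
  letI := Classical.decRel G.Adj
  simp [adjM, h]

lemma adjM_zero {V : Type*} [Fintype V] [DecidableEq V] {G : SimpleGraph V} {x y : V}
    (h : ¬ G.Adj x y) : adjM G x y = 0 := by
  letI := Classical.decRel G.Adj
  simp [adjM, h]

lemma deleteVert_adj {V : Type*} (G : SimpleGraph V) (w : V) (i j : {u : V // u ≠ w}) :
    (deleteVert G w).Adj i j ↔ G.Adj i.1 j.1 := SimpleGraph.comap_adj

lemma deleteVert2_adj {V : Type*} (G : SimpleGraph V) (u w : V)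
    (i j : {x : V // x ≠ u ∧ x ≠ w}) :
    (deleteVert2 G u w).Adj i j ↔ G.Adj i.1 j.1 := SimpleGraph.comap_adj

section Expand
variable {α β : Type*} [Fintype α] [DecidableEq α] [Fintype β] [DecidableEq β]
  (G : SimpleGraph α) (L : SimpleGraph β) (v : α) (r : β) (a : β) (ha : a ≠ r)

lemma expand_h1 :
    charPolyG (deleteVert (oneSum G L v r) (.inl (.inr ⟨a, ha⟩))) =
      (bigM (adjM (deleteVert G v)) (adjM (deleteVert2 L a r))
        (fun i => adjM G i.1 v) (fun i => adjM G i.1 v)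
        (fun j => adjM L j.1 r) (fun j => adjM L j.1 r) 0).charpoly := by
  apply charPolyG_eq_charpoly _ _ (splitBig v r a ha)
  · rintro ⟨(x | y) | u, hi⟩ ⟨(x' | y') | u', hj⟩ hadj <;>
      simp only [deleteVert, oneSum, SimpleGraph.comap_adj, SimpleGraph.fromRel_adj,
        Function.Embedding.coe_subtype, ne_eq] at hadj <;>
      simp only [splitBig, Equiv.coe_fn_mk, bigM, Matrix.of_apply]
    · exact adjM_one ((deleteVert_adj G v x x').mpr (hadj.2.elim id fun h => G.adj_symm h))
    · exact (hadj.2.elim id id).elim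
    · exact adjM_one (hadj.2.elim id False.elim)
    · exact (hadj.2.elim id id).elim
    · exact adjM_one ((deleteVert2_adj L a r _ _).mpr (hadj.2.elim id fun h => L.adj_symm h))
    · exact adjM_one (hadj.2.elim id False.elim)
    · exact adjM_one (hadj.2.elim False.elim id)
    · exact adjM_one (hadj.2.elim False.elim id)
    · exact (hadj.2.elim id id).elim
  · rintro ⟨(x | y) | u, hi⟩ ⟨(x' | y') | u', hj⟩ hadj <;>
      simp only [deleteVert, oneSum, SimpleGraph.comap_adj, SimpleGraph.fromRel_adj,
        Function.Embedding.coe_subtype, ne_eq, not_and, not_or] at hadj <;>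
      simp only [splitBig, Equiv.coe_fn_mk, bigM, Matrix.of_apply]
    · refine adjM_zero fun hA => ?_
      have hx := (deleteVert_adj G v x x').mp hA
      have hne : ¬ (Sum.inl (Sum.inl x) : ({x : α // x ≠ v} ⊕ {y : β // y ≠ r}) ⊕ Unit) =
          Sum.inl (Sum.inl x') := by
        simp only [Sum.inl.injEq]
        exact fun h => hx.ne (congrArg Subtype.val h)
      exact (hadj hne).1 hx
    · refine adjM_zero fun hA => ?_
      exact (hadj (by simp)).1 hA
    · refine adjM_zero fun hA => ?_
      have hy := (deleteVert2_adj L a r _ _).mp hA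
      have hne : ¬ (Sum.inl (Sum.inr y) : ({x : α // x ≠ v} ⊕ {y : β // y ≠ r}) ⊕ Unit) =
          Sum.inl (Sum.inr y') := by
        simp only [Sum.inl.injEq, Sum.inr.injEq]
        exact fun h => hA.ne (Subtype.ext (congrArg (Subtype.val : {y : β // y ≠ r} → β) h))
      exact (hadj hne).1 hy
    · refine adjM_zero fun hA => ?_
      exact (hadj (by simp)).1 hA
    · refine adjM_zero fun hA => ?_
      exact (hadj (by simp)).2 hA
    · refine adjM_zero fun hA => ?_
      exact (hadj (by simp)).2 hA

lemma expand_h3 :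
    charPolyG G =
      (smallM (adjM (deleteVert G v)) (fun i => adjM G i.1 v) (fun i => adjM G i.1 v)
        0).charpoly := by
  apply charPolyG_eq_charpoly _ _ (splitAt v)
  · intro i j hadj
    by_cases hi : i = v <;> by_cases hj : j = v
    · subst hi; subst hj; exact absurd hadj (G.loopless.irrefl _)
    · subst hi
      simp only [splitAt, Equiv.coe_fn_mk, dif_pos rfl, dif_neg hj, smallM, Matrix.of_apply]
      exact adjM_one (G.adj_symm hadj)
    · subst hj
      simp only [splitAt, Equiv.coe_fn_mk, dif_neg hi, dif_pos rfl, smallM, Matrix.of_apply]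
      exact adjM_one hadj
    · simp only [splitAt, Equiv.coe_fn_mk, dif_neg hi, dif_neg hj, smallM, Matrix.of_apply]
      exact adjM_one ((deleteVert_adj G v ⟨i, hi⟩ ⟨j, hj⟩).mpr hadj)
  · intro i j hadj
    by_cases hi : i = v <;> by_cases hj : j = v
    · subst hi; subst hj
      simp [splitAt, smallM]
    · subst hi
      simp only [splitAt, Equiv.coe_fn_mk, dif_pos rfl, dif_neg hj, smallM, Matrix.of_apply]
      exact adjM_zero fun h => hadj (G.adj_symm h)
    · subst hj
      simp only [splitAt, Equiv.coe_fn_mk, dif_neg hi, dif_pos rfl, smallM, Matrix.of_apply]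
      exact adjM_zero hadj
    · simp only [splitAt, Equiv.coe_fn_mk, dif_neg hi, dif_neg hj, smallM, Matrix.of_apply]
      exact adjM_zero fun h => hadj ((deleteVert_adj G v ⟨i, hi⟩ ⟨j, hj⟩).mp h)

lemma expand_h2 (ha' : a ≠ r) :
    charPolyG (deleteVert L a) =
      (smallM (adjM (deleteVert2 L a r)) (fun j => adjM L j.1 r) (fun j => adjM L j.1 r)
        0).charpoly := by
  apply charPolyG_eq_charpoly _ _ (splitAt2 r a ha')
  · intro i j hadj
    have hadj' : L.Adj i.1 j.1 := (deleteVert_adj L a i j).mp hadj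
    by_cases hi : i.1 = r <;> by_cases hj : j.1 = r
    · exact absurd (Subtype.ext (hi.trans hj.symm) : i = j) hadj.ne
    · simp only [splitAt2, Equiv.coe_fn_mk, dif_pos hi, dif_neg hj, smallM, Matrix.of_apply]
      exact adjM_one (L.adj_symm (hi ▸ hadj'))
    · simp only [splitAt2, Equiv.coe_fn_mk, dif_neg hi, dif_pos hj, smallM, Matrix.of_apply]
      exact adjM_one (hj ▸ hadj')
    · simp only [splitAt2, Equiv.coe_fn_mk, dif_neg hi, dif_neg hj, smallM, Matrix.of_apply]
      exact adjM_one ((deleteVert2_adj L a r ⟨i.1, i.2, hi⟩ ⟨j.1, j.2, hj⟩).mpr hadj')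
  · intro i j hadj
    rw [deleteVert_adj] at hadj
    by_cases hi : i.1 = r <;> by_cases hj : j.1 = r
    · simp only [splitAt2, Equiv.coe_fn_mk, dif_pos hi, dif_pos hj, smallM, Matrix.of_apply]
    · simp only [splitAt2, Equiv.coe_fn_mk, dif_pos hi, dif_neg hj, smallM, Matrix.of_apply]
      exact adjM_zero fun h => hadj (hi ▸ L.adj_symm h)
    · simp only [splitAt2, Equiv.coe_fn_mk, dif_neg hi, dif_pos hj, smallM, Matrix.of_apply]
      exact adjM_zero fun h => hadj (hj ▸ h)
    · simp only [splitAt2, Equiv.coe_fn_mk, dif_neg hi, dif_neg hj, smallM, Matrix.of_apply]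
      exact adjM_zero fun h =>
        hadj ((deleteVert2_adj L a r ⟨i.1, i.2, hi⟩ ⟨j.1, j.2, hj⟩).mp h)

lemma expand_full :
    charPolyG (deleteVert (oneSum G L v r) (.inl (.inr ⟨a, ha⟩))) =
      charPolyG (deleteVert G v) * charPolyG (deleteVert L a)
      + charPolyG G * charPolyG (deleteVert2 L a r)
      - X * charPolyG (deleteVert G v) * charPolyG (deleteVert2 L a r) := by
  rw [expand_h1 G L v r a ha, bigM_charpoly, ← expand_h2 L r a ha, ← expand_h3 G v,
    charPolyG_def (deleteVert G v), charPolyG_def (deleteVert2 L a r)]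
end Expand


/-- If `L` has pairwise cospectral vertices `A` and a vertex `r ∉ A` such that the
vertices of `A` remain pairwise cospectral in `L \ r`, then in the 1-sum `G'` of any
graph `G` (at a vertex `v`) with `L` (at `r`), the vertices of `A` are pairwise
cospectral in `G'`. -/
theorem stmt12 {α β : Type*} [Fintype α] [DecidableEq α] [Fintype β] [DecidableEq β]
    (G : SimpleGraph α) (L : SimpleGraph β) (v : α) (r : β) (A : Finset β) (hr : r ∉ A)
    (hcosL : ∀ a ∈ A, ∀ b ∈ A, charPolyG (deleteVert L a) = charPolyG (deleteVert L b))
    (hcosLr : ∀ a ∈ A, ∀ b ∈ A,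
      charPolyG (deleteVert2 L a r) = charPolyG (deleteVert2 L b r)) :
    ∀ a, ∀ ha : a ∈ A, ∀ b, ∀ hb : b ∈ A,
      charPolyG (deleteVert (oneSum G L v r) (.inl (.inr ⟨a, fun h => hr (h ▸ ha)⟩))) =
        charPolyG (deleteVert (oneSum G L v r) (.inl (.inr ⟨b, fun h => hr (h ▸ hb)⟩))) := by
  intro a ha b hb
  rw [expand_full G L v r a (fun h => hr (h ▸ ha)),
    expand_full G L v r b (fun h => hr (h ▸ hb)),
    hcosL a ha b hb, hcosLr a ha b hb]
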